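/- An abelian group A is free abelian if and only if A admits a well-ordered ascending series of subgroups (A_s), continuous at limit ordinals, starting at 0 and ending at A, with each successive quotient A_{s+1}/A_s infinite cyclic. -/

import Mathlib

universe u


open Ordinal in
theorem freeAbelian_forward (A : Type u) [AddCommGroup A] [Module.Free ℤ A] :
    ∃ (lam : Ordinal.{u}) (c : Ordinal.{u} → AddSubgroup A),
      c 0 = ⊥ ∧ c lam = ⊤ ∧ Monotone c ∧
      (∀ o : Ordinal.{u}, o ≤ lam → Order.IsSuccLimit o →
        c o = ⨆ o' : {o'' : Ordinal.{u} // o'' < o}, c o'.1) ∧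
      (∀ o : Ordinal.{u}, o < lam →
        Nonempty ((c (o + 1) ⧸ (c o).addSubgroupOf (c (o + 1))) ≃+ ℤ)) := by
  classical
  set ι := Module.Free.ChooseBasisIndex ℤ A with hι
  set b := Module.Free.chooseBasis ℤ A with hb
  let r : ι → ι → Prop := WellOrderingRel
  set S : Ordinal.{u} → Set ι := fun o => {i | Ordinal.typein r i < o} with hS
  set c : Ordinal.{u} → AddSubgroup A :=
    fun o => AddSubgroup.toIntSubmodule.symm (Submodule.span ℤ (⇑b '' S o)) with hc
  have hmemc : ∀ (o : Ordinal.{u}) (x : A),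
      x ∈ c o ↔ x ∈ Submodule.span ℤ (⇑b '' S o) := fun o x => Iff.rfl
  refine ⟨Ordinal.type r, c, ?_, ?_, ?_, ?_, ?_⟩
  · have : S 0 = ∅ := by
      ext i; simp [hS]
    rw [hc]; simp only [this, Set.image_empty, Submodule.span_empty]
    exact map_bot _
  · have : S (Ordinal.type r) = Set.univ := by
      ext i; simp [hS, Ordinal.typein_lt_type]
    rw [hc]; simp only [this, Set.image_univ, Module.Basis.span_eq]
    exact map_top _
  · intro o1 o2 h
    apply (AddSubgroup.toIntSubmodule (M := A)).symm.monotone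
    refine Submodule.span_mono (Set.image_mono ?_)
    intro i hi
    simp only [hS, Set.mem_setOf_eq] at hi ⊢
    exact lt_of_lt_of_le (show Ordinal.typein r i < o1 from hi) h
  · intro o _ ho
    have hset : S o = ⋃ o' : {o'' : Ordinal.{u} // o'' < o}, S o'.1 := by
      ext i
      simp only [hS, Set.mem_setOf_eq, Set.mem_iUnion]
      constructor
      · intro h
        refine ⟨⟨Ordinal.typein r i + 1, ?_⟩, ?_⟩
        · rw [Ordinal.add_one_eq_succ]; exact ho.succ_lt h
        · show Ordinal.typein r i < Ordinal.typein r i + 1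
          rw [Ordinal.add_one_eq_succ]; exact Order.lt_succ _
      · rintro ⟨o', h⟩
        exact h.trans o'.2
    rw [hc]
    simp only [hset, Set.image_iUnion, Submodule.span_iUnion]
    exact OrderIso.map_iSup _ _
  · intro o ho
    set i₀ : ι := Ordinal.enum r ⟨o, ho⟩ with hi₀
    have htypein : Ordinal.typein r i₀ = o := Ordinal.typein_enum r ho
    have hbi₀ : b i₀ ∈ c (o + 1) := by
      rw [hmemc]
      exact Submodule.subset_span ⟨i₀, by
        show Ordinal.typein r i₀ < o + 1; rw [htypein]; exact Order.lt_add_one_iff.mpr le_rfl, rfl⟩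
    set f : c (o + 1) →+ ℤ :=
      (b.coord i₀).toAddMonoidHom.comp (c (o + 1)).subtype with hf
    have hfx : ∀ x : c (o + 1), f x = b.repr (x : A) i₀ := fun x => rfl
    have hsurj : Function.Surjective f := by
      intro n
      refine ⟨⟨n • b i₀, AddSubgroup.zsmul_mem _ hbi₀ n⟩, ?_⟩
      rw [hfx]
      simp [Module.Basis.repr_self]
    have hker : f.ker = (c o).addSubgroupOf (c (o + 1)) := by
      ext x
      rw [AddMonoidHom.mem_ker, AddSubgroup.mem_addSubgroupOf, hfx, hmemc,
        Module.Basis.mem_span_image]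
      have hx1 : ↑(b.repr (x : A)).support ⊆ S (o + 1) := by
        rw [← Module.Basis.mem_span_image, ← hmemc]; exact x.2
      constructor
      · intro h i hi
        have h1 : Ordinal.typein r i < o + 1 := hx1 hi
        rw [Ordinal.add_one_eq_succ, Order.lt_succ_iff] at h1
        refine lt_of_le_of_ne h1 (fun he => ?_)
        have hii : i = i₀ := Ordinal.typein_injective r (by rw [htypein, he])
        have hi' : (b.repr (x : A)) i ≠ 0 := Finsupp.mem_support_iff.mp (Finset.mem_coe.mp hi)
        rw [hii, h] at hi'
        exact hi' rfl
      · intro h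
        by_contra hne
        have : i₀ ∈ ((b.repr (x : A)).support : Set ι) :=
          Finset.mem_coe.mpr (Finsupp.mem_support_iff.mpr hne)
        have := h this
        rw [hS, Set.mem_setOf_eq, htypein] at this
        exact lt_irrefl o this
    exact ⟨hker ▸ QuotientAddGroup.quotientKerEquivOfSurjective f hsurj⟩

theorem freeAbelian_backward (A : Type u) [AddCommGroup A]
    (lam : Ordinal.{u}) (c : Ordinal.{u} → AddSubgroup A)
    (h0 : c 0 = ⊥) (htop : c lam = ⊤) (hmono : Monotone c)
    (hlim : ∀ o : Ordinal.{u}, o ≤ lam → Order.IsSuccLimit o →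
      c o = ⨆ o' : {o'' : Ordinal.{u} // o'' < o}, c o'.1)
    (hsucc : ∀ o : Ordinal.{u}, o < lam →
      Nonempty ((c (o + 1) ⧸ (c o).addSubgroupOf (c (o + 1))) ≃+ ℤ)) :
    Module.Free ℤ A := by
  classical
  let φ : ∀ o : {o : Ordinal.{u} // o < lam},
      (c (o.1 + 1) ⧸ (c o.1).addSubgroupOf (c (o.1 + 1))) ≃+ ℤ :=
    fun o => (hsucc o.1 o.2).some
  let xq : ∀ o : {o : Ordinal.{u} // o < lam}, c (o.1 + 1) :=
    fun o => (QuotientAddGroup.mk_surjective ((φ o).symm 1)).choose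
  have hxq : ∀ o : {o : Ordinal.{u} // o < lam},
      (QuotientAddGroup.mk (xq o) : c (o.1 + 1) ⧸ (c o.1).addSubgroupOf (c (o.1 + 1)))
        = (φ o).symm 1 :=
    fun o => (QuotientAddGroup.mk_surjective ((φ o).symm 1)).choose_spec
  have hx : ∀ o : {o : Ordinal.{u} // o < lam},
      φ o (QuotientAddGroup.mk (xq o)) = 1 := by
    intro o
    rw [hxq]
    simp
  set X : {o : Ordinal.{u} // o < lam} → A := fun o => (xq o : A) with hX
  have hXmem : ∀ o : {o : Ordinal.{u} // o < lam}, X o ∈ c (o.1 + 1) :=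
    fun o => (xq o).2
  -- key successor step
  have key : ∀ (o : {o : Ordinal.{u} // o < lam}) (a : A) (ha : a ∈ c (o.1 + 1)),
      ∃ n : ℤ, a - n • X o ∈ c o.1 := by
    intro o a ha
    set π := QuotientAddGroup.mk' ((c o.1).addSubgroupOf (c (o.1 + 1))) with hπ
    set n : ℤ := φ o (π ⟨a, ha⟩) with hn
    refine ⟨n, ?_⟩
    have h1q : π (⟨a, ha⟩ - n • xq o) = 0 := by
      apply (φ o).injective
      have e : φ o (π (xq o)) = 1 := hx o
      calc φ o (π (⟨a, ha⟩ - n • xq o))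
          = φ o (π ⟨a, ha⟩) - n • φ o (π (xq o)) := by
            rw [map_sub, map_zsmul, map_sub, map_zsmul]
        _ = n - n • (1 : ℤ) := by rw [← hn, e]
        _ = 0 := by simp
        _ = φ o 0 := by rw [map_zero]
    have h2 : (⟨a, ha⟩ - n • xq o : c (o.1 + 1)) ∈
        (c o.1).addSubgroupOf (c (o.1 + 1)) := by
      rw [← QuotientAddGroup.eq_zero_iff]
      exact h1q
    rw [AddSubgroup.mem_addSubgroupOf] at h2
    simpa using h2
  -- spanning
  have hspan : ∀ o : Ordinal.{u}, o ≤ lam → ∀ a ∈ c o,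
      a ∈ Submodule.span ℤ (Set.range X) := by
    intro o
    induction o using Ordinal.induction with
    | h o IH =>
      intro hole a ha
      rcases Ordinal.zero_or_succ_or_isSuccLimit o with h | ⟨o', rfl⟩ | holim
      · subst h; rw [h0] at ha
        simp only [AddSubgroup.mem_bot] at ha
        subst ha; exact Submodule.zero_mem _
      · rw [← Ordinal.add_one_eq_succ] at *
        have ho' : o' < lam := lt_of_lt_of_le (by
          rw [Ordinal.add_one_eq_succ]; exact Order.lt_succ o') hole
        obtain ⟨n, hn⟩ := key ⟨o', ho'⟩ a ha
        have h1 : a - n • X ⟨o', ho'⟩ ∈ Submodule.span ℤ (Set.range X) :=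
          IH o' (by rw [Ordinal.add_one_eq_succ]; exact Order.lt_succ o')
            (le_of_lt ho') _ hn
        have h2 : n • X ⟨o', ho'⟩ ∈ Submodule.span ℤ (Set.range X) :=
          Submodule.smul_mem _ n (Submodule.subset_span ⟨⟨o', ho'⟩, rfl⟩)
        have := Submodule.add_mem _ h1 h2
        simpa using this
      · have hne : Nonempty {o'' : Ordinal.{u} // o'' < o} := ⟨⟨0, holim.pos⟩⟩
        have hdir : Directed (· ≤ ·) (fun o' : {o'' : Ordinal.{u} // o'' < o} => c o'.1) := by
          intro i j
          exact ⟨⟨max i.1 j.1, max_lt i.2 j.2⟩, hmono (le_max_left _ _),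
            hmono (le_max_right _ _)⟩
        rw [hlim o hole holim] at ha
        obtain ⟨o', ho'⟩ := (AddSubgroup.mem_iSup_of_directed hdir).mp ha
        exact IH o'.1 o'.2 (le_of_lt (lt_of_lt_of_le o'.2 hole)) a ho'
  -- linear independence
  have hli : LinearIndependent ℤ X := by
    rw [linearIndependent_iff]
    intro l hl
    by_contra hne
    have hsup : l.support.Nonempty := Finsupp.support_nonempty_iff.mpr hne
    set j := l.support.max' hsup with hj
    have hjmem : j ∈ l.support := l.support.max'_mem hsup
    have hw : ∑ i ∈ l.support.erase j, l i • X i ∈ c j.1 := by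
      apply AddSubgroup.sum_mem
      intro i hi
      have hij : i ≠ j := Finset.ne_of_mem_erase hi
      have hile : i ≤ j := l.support.le_max' i (Finset.mem_of_mem_erase hi)
      have hilt : i.1 < j.1 := lt_of_le_of_ne hile (fun h => hij (Subtype.ext h))
      have : (i.1 + 1) ≤ j.1 := by
        rw [Ordinal.add_one_eq_succ]; exact Order.succ_le_of_lt hilt
      exact AddSubgroup.zsmul_mem _ (hmono this (hXmem i)) _
    have hl' : ∑ i ∈ l.support, l i • X i = 0 := by
      rw [Finsupp.linearCombination_apply, Finsupp.sum] at hl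
      exact hl
    rw [← Finset.add_sum_erase _ (fun i => l i • X i) hjmem] at hl'
    have hzsum : l j • X j + ∑ i ∈ l.support.erase j, l i • X i = 0 := hl'
    have hz : l j • X j ∈ c j.1 := by
      have : l j • X j = -(∑ i ∈ l.support.erase j, l i • X i) := by
        linear_combination (norm := abel) hzsum
      rw [this]
      exact AddSubgroup.neg_mem _ hw
    have hq : QuotientAddGroup.mk (s := (c j.1).addSubgroupOf (c (j.1 + 1)))
        (l j • xq j) = 0 := by
      rw [QuotientAddGroup.eq_zero_iff, AddSubgroup.mem_addSubgroupOf]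
      simpa using hz
    have : (l j : ℤ) = 0 := by
      have h1 := congrArg (φ j) hq
      rw [QuotientAddGroup.mk_zsmul, map_zsmul, hx, map_zero] at h1
      simpa using h1
    exact (Finsupp.mem_support_iff.mp hjmem) this
  exact Module.Free.of_basis (Module.Basis.mk hli (by
    intro a _
    exact hspan lam le_rfl a (htop ▸ AddSubgroup.mem_top a)))

/-- An abelian group `A` is free abelian if and only if `A` admits a well-ordered
ascending series of subgroups `(A_s)_{s ≤ λ}`, continuous at limit ordinals, with
`A_0 = 0`, `A_λ = A`, and each successive quotient `A_{s+1}/A_s` infinite cyclic. -/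
theorem freeAbelian_iff_exists_wellOrdered_series (A : Type u) [AddCommGroup A] :
    Module.Free ℤ A ↔
      ∃ (lam : Ordinal.{u}) (c : Ordinal.{u} → AddSubgroup A),
        c 0 = ⊥ ∧ c lam = ⊤ ∧ Monotone c ∧
        (∀ o : Ordinal.{u}, o ≤ lam → Order.IsSuccLimit o →
          c o = ⨆ o' : {o'' : Ordinal.{u} // o'' < o}, c o'.1) ∧
        (∀ o : Ordinal.{u}, o < lam →
          Nonempty ((c (o + 1) ⧸ (c o).addSubgroupOf (c (o + 1))) ≃+ ℤ)) := by
  constructor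
  · intro h
    exact freeAbelian_forward A
  · rintro ⟨lam, c, h0, htop, hmono, hlim, hsucc⟩
    exact freeAbelian_backward A lam c h0 htop hmono hlim hsucc
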